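/- arXiv:1401.1598 — 2 statements merged into one kernel-verified Lean document; each statement's English description precedes it below -/
import Mathlib

section
/- Let q be a prime power and b ≥ 2 an integer. Then the coefficients of L(u) = ∏_{i=1}^∞ (1 - u q^{-bi}) satisfy |[u^c]L| ≤ 2 q^b · q^{-bc} for all c ≥ 1. -/
open Polynomial Finset

/-- Recursive bound `Mb t c = t^(c(c+1)/2)/(1-t)^c`. -/
noncomputable def Mb (t : ℝ) : ℕ → ℝ
  | 0 => 1
  | (c+1) => t ^ (c+1) / (1 - t) * Mb t c

lemma Mb_pos {t : ℝ} (ht0 : 0 < t) (ht1 : t < 1) : ∀ c, 0 < Mb t c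
  | 0 => one_pos
  | (c+1) => by
      have := Mb_pos ht0 ht1 c
      have h1 : 0 < 1 - t := by linarith
      have h2 : 0 < t ^ (c+1) := pow_pos ht0 _
      simp only [Mb]
      positivity

noncomputable def PP (t : ℝ) (m : ℕ) : Polynomial ℝ :=
  ∏ i ∈ Finset.range m, (1 - Polynomial.C (t ^ (i+1)) * Polynomial.X)

lemma PP_natDegree_le (t : ℝ) (m : ℕ) : (PP t m).natDegree ≤ m := by
  refine (Polynomial.natDegree_prod_le _ _).trans ?_
  calc ∑ i ∈ Finset.range m, (1 - Polynomial.C (t ^ (i+1)) * Polynomial.X).natDegree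
      ≤ ∑ i ∈ Finset.range m, 1 := by
        refine Finset.sum_le_sum fun i _ => ?_
        refine (Polynomial.natDegree_sub_le _ _).trans ?_
        simp only [Polynomial.natDegree_one, max_le_iff]
        constructor
        · omega
        · refine (Polynomial.natDegree_mul_le).trans ?_
          simp
    _ = m := by simp

lemma PP_coeff_zero (t : ℝ) {m n : ℕ} (h : m < n) : (PP t m).coeff n = 0 :=
  Polynomial.coeff_eq_zero_of_natDegree_lt (lt_of_le_of_lt (PP_natDegree_le t m) h)

lemma PP_succ_coeff (t : ℝ) (m n : ℕ) :
    (PP t (m+1)).coeff (n+1) = (PP t m).coeff (n+1) - t^(m+1) * (PP t m).coeff n := by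
  have h : PP t (m+1) = PP t m - Polynomial.C (t^(m+1)) * (PP t m * Polynomial.X) := by
    rw [PP, Finset.prod_range_succ, ← PP]
    ring
  rw [h, Polynomial.coeff_sub, Polynomial.coeff_C_mul, Polynomial.coeff_mul_X]

lemma coeff_bound {t : ℝ} (ht0 : 0 < t) (ht1 : t < 1) :
    ∀ c m : ℕ, |(PP t m).coeff c| ≤ Mb t c := by
  intro c
  induction c with
  | zero =>
    intro m
    have : (PP t m).coeff 0 = 1 := by
      rw [Polynomial.coeff_zero_eq_eval_zero, PP, Polynomial.eval_prod]
      simp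
    rw [this]; simp [Mb]
  | succ c ih =>
    have h1t : 0 < 1 - t := by linarith
    have hMb := Mb_pos ht0 ht1 c
    have aux : ∀ m, c ≤ m →
        |(PP t m).coeff (c+1)| ≤ (t^(c+1) - t^(m+1))/(1-t) * Mb t c := by
      intro m hm
      induction m, hm using Nat.le_induction with
      | base =>
        rw [PP_coeff_zero t (by omega)]
        simp
      | succ m hm ihm =>
        rw [PP_succ_coeff]
        calc |(PP t m).coeff (c+1) - t^(m+1) * (PP t m).coeff c|
            ≤ |(PP t m).coeff (c+1)| + t^(m+1) * |(PP t m).coeff c| := by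
              rw [sub_eq_add_neg]
              refine (abs_add_le _ _).trans ?_
              rw [abs_neg, abs_mul, abs_of_pos (pow_pos ht0 _)]
          _ ≤ (t^(c+1) - t^(m+1))/(1-t) * Mb t c + t^(m+1) * Mb t c := by
              gcongr
              exact ih m
          _ = (t^(c+1) - t^(m+1+1))/(1-t) * Mb t c := by
              field_simp
              ring
    intro m
    rcases le_or_gt c m with hm | hm
    · refine (aux m hm).trans ?_
      rw [show Mb t (c+1) = t^(c+1)/(1-t) * Mb t c from rfl]
      gcongr
      have : 0 < t^(m+1) := pow_pos ht0 _
      linarith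
    · rw [PP_coeff_zero t (by omega)]
      simp only [abs_zero]
      exact le_of_lt (Mb_pos ht0 ht1 _)

lemma Mb_le {t : ℝ} (ht0 : 0 < t) (ht : t ≤ 1/2) :
    ∀ c : ℕ, Mb t (c+1) ≤ 2 * t ^ c := by
  have ht1 : t < 1 := by linarith
  have h1t : 0 < 1 - t := by linarith
  intro c
  induction c with
  | zero =>
    simp only [Mb, zero_add, pow_one, pow_zero, mul_one]
    rw [div_le_iff₀ h1t]
    linarith
  | succ c ihc =>
    have key : t^(c+1+1) / (1-t) ≤ t := by
      rw [div_le_iff₀ h1t]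
      have hp1 : t^(c+1) ≤ t := by
        simpa using pow_le_pow_of_le_one ht0.le ht1.le (show 1 ≤ c+1 by omega)
      have heq : t^(c+1+1) = t^(c+1) * t := by ring
      nlinarith
    calc Mb t (c+1+1) = t^(c+1+1)/(1-t) * Mb t (c+1) := rfl
      _ ≤ t * (2 * t^c) := by
          refine mul_le_mul key ihc (le_of_lt (Mb_pos ht0 ht1 _)) ht0.le
      _ = 2 * t^(c+1) := by ring

/-- Let `q` be a prime power and `b ≥ 2` an integer.  The `c`-th Maclaurin
coefficient of `L(u) = ∏_{i=1}^∞ (1 - u q^{-bi})` (i.e. the limit `l` of the `c`-th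
coefficients of the partial products) satisfies `|l| ≤ 2 q^b · q^{-bc}` for `c ≥ 1`. -/
theorem stmt14 (q b : ℕ) (hq : IsPrimePow q) (hb : 2 ≤ b) (c : ℕ) (hc : 1 ≤ c)
    (l : ℝ)
    (hl : Filter.Tendsto
      (fun m : ℕ =>
        (∏ i ∈ Finset.range m,
          (1 - Polynomial.C (((q : ℝ) ^ (b * (i + 1)))⁻¹) * Polynomial.X)).coeff c)
      Filter.atTop (nhds l)) :
    |l| ≤ 2 * (q : ℝ) ^ b * ((q : ℝ) ^ (b * c))⁻¹ := by
  have hq2 : 2 ≤ q := hq.two_le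
  have hq2' : (2 : ℝ) ≤ (q : ℝ) := by exact_mod_cast hq2
  have hx : (2 : ℝ) ≤ (q : ℝ) ^ b := by
    calc (2:ℝ) ≤ (q:ℝ) := hq2'
      _ ≤ (q:ℝ)^b := le_self_pow₀ (by linarith) (by omega)
  have hxpos : (0 : ℝ) < (q : ℝ) ^ b := by linarith
  set t : ℝ := ((q : ℝ) ^ b)⁻¹ with htdef
  have ht0 : 0 < t := inv_pos.mpr hxpos
  have ht2 : t ≤ 1/2 := by
    rw [htdef]
    rw [inv_le_comm₀ (by linarith) (by norm_num)]
    simpa using hx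
  have ht1 : t < 1 := by linarith
  -- the polynomials coincide
  have hpoly : ∀ m : ℕ,
      (∏ i ∈ Finset.range m,
        (1 - Polynomial.C (((q : ℝ) ^ (b * (i + 1)))⁻¹) * Polynomial.X)) = PP t m := by
    intro m
    rw [PP]
    refine Finset.prod_congr rfl fun i _ => ?_
    congr 1
    rw [pow_mul, ← inv_pow]
  -- limit bound
  have hbound : |l| ≤ Mb t c := by
    have habs : Filter.Tendsto (fun m : ℕ => |(PP t m).coeff c|) Filter.atTop (nhds |l|) := by
      have := hl.abs
      simpa only [hpoly] using this
    exact le_of_tendsto' habs fun m => coeff_bound ht0 ht1 c m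
  refine hbound.trans ?_
  obtain ⟨d, rfl⟩ : ∃ d, c = d + 1 := ⟨c - 1, by omega⟩
  refine (Mb_le ht0 ht2 d).trans_eq ?_
  have h2 : ((q:ℝ) ^ (b * (d+1)))⁻¹ = t ^ (d+1) := by
    rw [pow_mul, ← inv_pow]
  have hne : ((q:ℝ) ^ b) ≠ 0 := ne_of_gt hxpos
  rw [h2, pow_succ, htdef]
  field_simp
end

section
/- Let q be a prime power and b ≥ 2, let N = N(q,b) be the number of monic irreducible polynomials of degree b over GF(q), let ω = ∏_{i=1}^∞ (1 - q^{-bi}), and let H = (b q^{-b} / (1 - q^{-b})²) · ω^b. Then |(1 - (1-H)^N) - (1 - e^{-1})| < 4 e^{-1} b q^{-b/2}. -/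
lemma geom_bd {x : ℝ} (hx : 2 ≤ x) (m : ℕ) : ∑ j ∈ Finset.range (m+1), x^j ≤ 2 * x^m := by
  induction m with
  | zero => norm_num
  | succ m ih =>
    rw [Finset.sum_range_succ]
    have h0 : (0:ℝ) ≤ x^m := by positivity
    have : x^(m+1) = x * x^m := by ring
    nlinarith [ih]

open ArithmeticFunction ArithmeticFunction.Moebius in
lemma divisor_sum_bd {q b : ℕ} (hq : 2 ≤ q) (hb : 2 ≤ b) :
    |(∑ d ∈ Nat.divisors b, (ArithmeticFunction.moebius d : ℝ) * (q : ℝ) ^ (b / d)) - (q:ℝ)^b|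
      ≤ 2 * (q:ℝ) ^ (b/2) := by
  have hb0 : b ≠ 0 := by omega
  have h1 : 1 ∈ b.divisors := Nat.one_mem_divisors.mpr hb0
  have hqR : (2:ℝ) ≤ (q:ℝ) := by exact_mod_cast hq
  rw [← Finset.add_sum_erase _ _ h1]
  simp only [ArithmeticFunction.moebius_apply_one, Nat.div_one, Int.cast_one, one_mul]
  rw [add_sub_cancel_left]
  calc |∑ d ∈ (Nat.divisors b).erase 1, (μ d : ℝ) * (q:ℝ) ^ (b / d)|
      ≤ ∑ d ∈ (Nat.divisors b).erase 1, |(μ d : ℝ) * (q:ℝ) ^ (b / d)| :=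
        Finset.abs_sum_le_sum_abs _ _
    _ ≤ ∑ d ∈ (Nat.divisors b).erase 1, (q:ℝ) ^ (b / d) := by
        apply Finset.sum_le_sum
        intro d _
        rw [abs_mul, abs_pow, abs_of_nonneg (by positivity : (0:ℝ) ≤ (q:ℝ))]
        have : |(μ d : ℝ)| ≤ 1 := by
          have := ArithmeticFunction.abs_moebius_le_one (n := d)
          exact_mod_cast (by exact_mod_cast this : |((μ d : ℤ) : ℝ)| ≤ 1)
        nlinarith [pow_nonneg (by positivity : (0:ℝ) ≤ (q:ℝ)) (b/d),
          pow_pos (by positivity : (0:ℝ) < (q:ℝ)) (b/d)]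
    _ = ∑ e ∈ (Nat.divisors b).erase 1 |>.image (fun d => b / d), (q:ℝ) ^ e := by
        rw [Finset.sum_image]
        intro d1 hd1 d2 hd2 hdd
        have h1 : d1 ∣ b := (Nat.mem_divisors.mp (Finset.mem_of_mem_erase hd1)).1
        have h2 : d2 ∣ b := (Nat.mem_divisors.mp (Finset.mem_of_mem_erase hd2)).1
        have e1 : b / (b / d1) = d1 := Nat.div_div_self h1 hb0
        have e2 : b / (b / d2) = d2 := Nat.div_div_self h2 hb0
        rw [← e1, ← e2, show b / d1 = b / d2 from hdd]
    _ ≤ ∑ e ∈ Finset.range (b/2 + 1), (q:ℝ) ^ e := by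
        apply Finset.sum_le_sum_of_subset_of_nonneg
        · intro e he
          obtain ⟨d, hd, rfl⟩ := Finset.mem_image.mp he
          have hd1 : d ≠ 1 := Finset.ne_of_mem_erase hd
          have hdvd : d ∣ b := (Nat.mem_divisors.mp (Finset.mem_of_mem_erase hd)).1
          have hd0 : d ≠ 0 := by rintro rfl; simp at hdvd; omega
          have hd2 : 2 ≤ d := by omega
          have : b / d ≤ b / 2 := Nat.div_le_div_left hd2 (by omega)
          exact Finset.mem_range.mpr (by omega)
        · intro e _ _; positivity
    _ ≤ 2 * (q:ℝ) ^ (b/2) := geom_bd hqR _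


lemma omega_bds {x : ℝ} (h0 : 0 < x) (h1 : x ≤ 1/4) :
    1 - x/(1-x)^2 ≤ (∏' i : ℕ, (1 - x^(i+1))) ∧ (∏' i : ℕ, (1 - x^(i+1))) ≤ 1 - x := by
  have hx1 : x < 1 := by linarith
  have hpow : ∀ i : ℕ, 0 < x^(i+1) ∧ x^(i+1) ≤ x := by
    intro i
    exact ⟨pow_pos h0 _, by
      calc x^(i+1) ≤ x^1 := pow_le_pow_of_le_one h0.le hx1.le (by omega)
        _ = x := pow_one x⟩
  have hpos : ∀ i : ℕ, 0 < 1 - x^(i+1) := fun i => by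
    have := (hpow i).2; linarith
  -- -log(1-u) ≤ u/(1-x)
  have hlogle : ∀ i : ℕ, -Real.log (1 - x^(i+1)) ≤ x^(i+1) * (1-x)⁻¹ := by
    intro i
    obtain ⟨hu0, hux⟩ := hpow i
    have hne : (1 - x^(i+1)) ≠ 0 := (hpos i).ne'
    have h := Real.log_le_sub_one_of_pos (show (0:ℝ) < (1 - x^(i+1))⁻¹ from inv_pos.mpr (hpos i))
    rw [Real.log_inv] at h
    have heq : (1 - x^(i+1))⁻¹ - 1 = x^(i+1) / (1 - x^(i+1)) := by
      field_simp
      ring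
    rw [heq] at h
    have h2 : x^(i+1) / (1 - x^(i+1)) ≤ x^(i+1) * (1-x)⁻¹ := by
      rw [← div_eq_mul_inv]
      apply div_le_div_of_nonneg_left hu0.le (by linarith)
      linarith
    linarith
  have hlognonneg : ∀ i : ℕ, 0 ≤ -Real.log (1 - x^(i+1)) := by
    intro i
    have : Real.log (1 - x^(i+1)) ≤ 0 := Real.log_nonpos (hpos i).le (by linarith [(hpow i).1])
    linarith
  have hgsum : Summable (fun i : ℕ => x^(i+1) * (1-x)⁻¹) := by
    apply Summable.mul_right
    have := (summable_geometric_of_lt_one h0.le hx1).mul_right x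
    apply this.congr
    intro i; rw [pow_succ]
  have hsumneg : Summable (fun i : ℕ => -Real.log (1 - x^(i+1))) :=
    Summable.of_nonneg_of_le hlognonneg hlogle hgsum
  have hsum : Summable (fun i : ℕ => Real.log (1 - x^(i+1))) := by
    have := hsumneg.neg
    simpa using this
  -- tprod = exp tsum
  have key : (∏' i : ℕ, (1 - x^(i+1))) = Real.exp (∑' i : ℕ, Real.log (1 - x^(i+1))) := by
    have := Real.rexp_tsum_eq_tprod (f := fun (i : ℕ) => 1 - x^(i+1))
      (fun i => hpos i) hsum
    exact this.symm
  set L := ∑' i : ℕ, Real.log (1 - x^(i+1)) with hL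
  -- upper bound : L ≤ log (1-x)
  have hub : L ≤ Real.log (1 - x) := by
    rw [hL, Summable.tsum_eq_zero_add hsum]
    simp only [pow_one, zero_add]
    have : (∑' i : ℕ, Real.log (1 - x^(i+1+1))) ≤ 0 := by
      apply tsum_nonpos
      intro i
      have := hlognonneg (i+1); linarith
    linarith
  -- lower bound
  have hlb : -(x / (1-x)^2) ≤ L := by
    have h2 : -L = ∑' i : ℕ, -Real.log (1 - x^(i+1)) := by
      rw [hL, ← tsum_neg]
    have h3 : (∑' i : ℕ, -Real.log (1 - x^(i+1))) ≤ ∑' i : ℕ, x^(i+1) * (1-x)⁻¹ :=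
      Summable.tsum_le_tsum hlogle hsumneg hgsum
    have h4 : (∑' i : ℕ, x^(i+1) * (1-x)⁻¹) = x / (1-x)^2 := by
      rw [tsum_mul_right]
      have : (∑' i : ℕ, x^(i+1)) = (∑' i : ℕ, x^i) * x := by
        rw [← tsum_mul_right]
        exact tsum_congr fun i => pow_succ x i
      rw [this, tsum_geometric_of_lt_one h0.le hx1, sq]
      field_simp
    rw [h4] at h3
    rw [← h2] at h3
    linarith
  constructor
  · rw [key]
    have := Real.add_one_le_exp L
    have h5 : 1 - x/(1-x)^2 ≤ L + 1 := by linarith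
    linarith
  · rw [key]
    calc Real.exp L ≤ Real.exp (Real.log (1-x)) := Real.exp_le_exp.mpr hub
      _ = 1 - x := Real.exp_log (by linarith)


-- exp bound
lemma abs_exp_sub_one_le {v c : ℝ} (h : |v| ≤ c) (hc : c < 1) : |Real.exp v - 1| ≤ c / (1 - c) := by
  obtain ⟨h1, h2⟩ := abs_le.mp h
  have hc0 : 0 ≤ c := le_trans (abs_nonneg v) h
  have hcpos : 0 < 1 - c := by linarith
  have e1 : Real.exp v ≤ (1 - c)⁻¹ := by
    have : Real.exp (-c) ≥ 1 - c := by linarith [Real.add_one_le_exp (-c)]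
    have h3 : Real.exp v ≤ Real.exp c := Real.exp_le_exp.mpr h2
    have h4 : Real.exp c = (Real.exp (-c))⁻¹ := by
      rw [← Real.exp_neg]; ring_nf
    rw [h4] at h3
    exact h3.trans (by gcongr)
  have e2 : 1 - c ≤ Real.exp v := by
    have : Real.exp (-c) ≤ Real.exp v := Real.exp_le_exp.mpr h1
    linarith [Real.add_one_le_exp (-c)]
  rw [abs_le]
  constructor
  · have : c ≤ c / (1-c) := by
      rw [le_div_iff₀ hcpos]; nlinarith
    linarith
  · have : (1-c)⁻¹ - 1 = c / (1-c) := by field_simp; ring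
    linarith

lemma E_facts : 25/69 < Real.exp (-1) ∧ Real.exp (-1) ≤ 1/2 := by
  have hE : Real.exp (-1) * Real.exp 1 = 1 := by rw [← Real.exp_add]; norm_num
  have he_lt : Real.exp 1 < 2.7182818286 := Real.exp_one_lt_d9
  have he_gt : (2.7182818283:ℝ) < Real.exp 1 := Real.exp_one_gt_d9
  have hEpos : 0 < Real.exp (-1) := Real.exp_pos _
  constructor
  · nlinarith
  · nlinarith

-- 2*b ≤ 2^b for 2 ≤ b
lemma two_mul_le_two_pow {b : ℕ} (hb : 2 ≤ b) : 2*b ≤ 2^b := by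
  induction b with
  | zero => omega
  | succ n ih =>
    rcases Nat.lt_or_ge n 2 with h | h
    · interval_cases n <;> omega
    · have h1 := ih h
      have h2 : 1 < 2^n := (Nat.one_lt_two_pow_iff (n := n)).mpr (by omega)
      have h3 : 2^(n+1) = 2*2^n := by rw [pow_succ]; ring
      omega

lemma aux1 {x : ℝ} (hx0 : 0 < x) (hx4 : x ≤ 1/4) :
    x / (1-x)^2 ≤ (16/9)*x := by
  have h34 : (3/4:ℝ) ≤ 1-x := by linarith
  have h916 : (9/16:ℝ) ≤ (1-x)^2 := by nlinarith
  rw [div_le_iff₀ (by nlinarith)]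
  nlinarith [mul_le_mul_of_nonneg_left h916 hx0.le]

lemma auxN {v w x y : ℝ} (hx0 : 0 < x) (h : |v - w| ≤ 2*y⁻¹) (hw : w*x = 1)
    (hyx : y⁻¹*x = y) : |v*x - 1| ≤ 2*y := by
  have h2 : |v - w| * x ≤ (2*y⁻¹) * x := mul_le_mul_of_nonneg_right h hx0.le
  have h3 : |(v - w) * x| = |v - w| * x := by
    rw [abs_mul, abs_of_pos hx0]
  have h4 : (v - w) * x = v*x - 1 := by rw [sub_mul, hw]
  calc |v*x - 1| = |v - w| * x := by rw [← h4, h3]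
    _ ≤ (2*y⁻¹) * x := h2
    _ = 2*y := by rw [mul_assoc, hyx]

lemma auxA {c ω : ℝ} (b : ℕ) (hc0 : 0 ≤ c) (hc1 : c ≤ 1) (hω : 1 - c ≤ ω) :
    1 - (b:ℝ)*c ≤ ω^b := by
  have h1 : 1 + (b:ℝ)*(-c) ≤ (1 + -c)^b := one_add_mul_le_pow (by linarith) b
  have h2 : (1 + -c)^b ≤ ω^b := pow_le_pow_left₀ (by linarith) (by linarith) b
  nlinarith

lemma aux2 {x y s bR : ℝ} (hx : x = y*y) (hy0 : 0 < y) (hyb : y < 11/50)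
    (hs : s = bR*y) (hb0 : 2 ≤ bR) : bR*(x/(1-x)^2) ≤ (1/4)*s := by
  have hx0 : 0 < x := by rw [hx]; positivity
  have hxsm : x < 121/2500 := by rw [hx]; nlinarith
  have hd : (1-x)^2 ≥ (2379/2500)^2 := by nlinarith
  have hs0 : 0 < s := by rw [hs]; nlinarith
  have h1 : x/(1-x)^2 ≤ x * (2500/2379)^2 := by
    rw [div_le_iff₀ (by nlinarith)]
    nlinarith
  have h2 : bR * x = s * y := by rw [hx, hs]; ring
  have h3 : bR*(x/(1-x)^2) ≤ (s*y) * (2500/2379)^2 := by nlinarith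
  nlinarith

lemma auxP {u A D P s : ℝ} (hD : 0 < D) (hD1 : D ≤ 1) (hA0 : 0 ≤ A) (hAD : A ≤ D)
    (hAge : 1 - (1/4)*s ≤ A) (hulo : 1 - s ≤ u) (huhi : u ≤ 1 + s)
    (hs : 0 < s) (hs44 : s < 11/25) (hPD : P*D = u*A) :
    1 - (5/4)*s ≤ P ∧ P ≤ 1+s := by
  have hu0 : 0 ≤ u := by linarith
  have huA : u*A ≤ (1+s)*D := by nlinarith
  have hP0 : 0 ≤ P := by nlinarith
  constructor
  · have h1 : (1-s)*(1-(1/4)*s) ≤ u*A := by nlinarith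
    have h2 : u*A ≤ P := by nlinarith
    nlinarith
  · nlinarith

lemma auxT {P H s : ℝ} (hP : P ≤ 1+s) (hH : H ≤ (11/50)*s) (hH0 : 0 ≤ H)
    (hs0 : 0 < s) (hs44 : s < 11/25) : P ≤ (1 + (7/5)*s)*(1-H) := by
  nlinarith

lemma auxR {s : ℝ} (hs0 : 0 < s) (hs44 : s < 11/25) :
    (7/5)*s / (1-(7/5)*s) < 4*s := by
  rw [div_lt_iff₀ (by linarith)]
  nlinarith

set_option maxHeartbeats 1000000 in
/-- Let `q` be a prime power and `b ≥ 2`, let `N = N(q,b) = (1/b)∑_{d∣b} μ(d) q^{b/d}`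
be the number of monic irreducible polynomials of degree `b` over `GF(q)`, let
`ω = ∏_{i=1}^∞ (1 - q^{-bi})` and `H = (b q^{-b}/(1-q^{-b})²) ω^b`.  Then
`|(1 - (1-H)^N) - (1 - e⁻¹)| < 4 e⁻¹ b q^{-b/2}`. -/
theorem stmt18 (q b N : ℕ) (hq : IsPrimePow q) (hb : 2 ≤ b)
    (hN : (N : ℝ) = (∑ d ∈ Nat.divisors b,
        (ArithmeticFunction.moebius d : ℝ) * (q : ℝ) ^ (b / d)) / b)
    (ω H : ℝ)
    (hω : ω = ∏' i : ℕ, (1 - ((q : ℝ) ^ (b * (i + 1)))⁻¹))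
    (hH : H = (b * ((q : ℝ) ^ b)⁻¹ / (1 - ((q : ℝ) ^ b)⁻¹) ^ 2) * ω ^ b) :
    |(1 - (1 - H) ^ N) - (1 - Real.exp (-1))|
      < 4 * Real.exp (-1) * b * ((q : ℝ) ^ ((b : ℝ) / 2))⁻¹ := by
  have hq2 : 2 ≤ q := hq.two_le
  have hqR : (2:ℝ) ≤ (q:ℝ) := by exact_mod_cast hq2
  have hq0 : (0:ℝ) < q := by linarith
  have hb2R : (2:ℝ) ≤ (b:ℝ) := by exact_mod_cast hb
  set y : ℝ := ((q : ℝ) ^ ((b : ℝ) / 2))⁻¹ with hydef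
  set x : ℝ := ((q : ℝ) ^ b)⁻¹ with hxdef
  have hrp : (0:ℝ) < (q:ℝ) ^ ((b:ℝ)/2) := Real.rpow_pos_of_pos hq0 _
  have hy0 : 0 < y := inv_pos.mpr hrp
  have hqb4 : (4:ℝ) ≤ (q:ℝ)^b := by
    calc (4:ℝ) = 2^2 := by norm_num
      _ ≤ (2:ℝ)^b := pow_le_pow_right₀ (by norm_num) hb
      _ ≤ (q:ℝ)^b := pow_le_pow_left₀ (by norm_num) hqR b
  have hqbpos : (0:ℝ) < (q:ℝ)^b := by positivity
  have hx0 : 0 < x := inv_pos.mpr hqbpos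
  have hx4 : x ≤ 1/4 := by
    rw [hxdef, inv_le_comm₀ hqbpos (by norm_num)]
    linarith
  -- y^2 = x
  have hsq : ((q:ℝ) ^ ((b:ℝ)/2))^2 = (q:ℝ)^b := by
    rw [← Real.rpow_natCast ((q:ℝ) ^ ((b:ℝ)/2)) 2, ← Real.rpow_mul hq0.le]
    norm_num
  have hyx : y^2 = x := by
    rw [hydef, hxdef, ← hsq, inv_pow]
  have hxe : x = y*y := by rw [← hyx]; ring
  -- b * x ≤ 1/2
  have h2b : (2:ℝ)*b ≤ (q:ℝ)^b := by
    calc (2:ℝ)*b ≤ 2^b := by exact_mod_cast two_mul_le_two_pow hb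
      _ ≤ (q:ℝ)^b := pow_le_pow_left₀ (by norm_num) hqR b
  have hbx12 : (b:ℝ)*x ≤ 1/2 := by
    rw [hxdef, mul_inv_le_iff₀ hqbpos]
    linarith
  -- N bound : |b*N*x - 1| ≤ 2*y
  have hNb : |(N:ℝ)*(b:ℝ) - (q:ℝ)^b| ≤ 2*y⁻¹ := by
    have hb0R : (b:ℝ) ≠ 0 := by positivity
    have hS : (N:ℝ)*(b:ℝ) = ∑ d ∈ Nat.divisors b,
        (ArithmeticFunction.moebius d : ℝ) * (q : ℝ) ^ (b / d) := by
      rw [hN]; field_simp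
    rw [hS]
    refine le_trans (divisor_sum_bd hq2 hb) ?_
    have h5 : (q:ℝ) ^ (b/2 : ℕ) ≤ (q:ℝ) ^ ((b:ℝ)/2) := by
      rw [← Real.rpow_natCast (q:ℝ) (b/2)]
      exact Real.rpow_le_rpow_of_exponent_le (by linarith) Nat.cast_div_le
    rw [hydef, inv_inv]
    linarith
  have hyix : y⁻¹ * x = y := by
    rw [← hyx]
    field_simp
  have hqx : (q:ℝ)^b * x = 1 := mul_inv_cancel₀ hqbpos.ne'
  have hbNx : |(b:ℝ)*(N:ℝ)*x - 1| ≤ 2*y := by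
    have := auxN hx0 hNb hqx hyix
    rwa [show (N:ℝ)*(b:ℝ)*x = (b:ℝ)*(N:ℝ)*x by ring] at this
  clear hNb hN hq
  -- ω bounds
  have hωx : ω = ∏' i : ℕ, (1 - x^(i+1)) := by
    rw [hω]
    congr 1
    ext i
    rw [hxdef, pow_mul, inv_pow]
  obtain ⟨hωge, hωle⟩ : 1 - x/(1-x)^2 ≤ ω ∧ ω ≤ 1 - x := by
    rw [hωx]; exact omega_bds hx0 hx4
  clear hω hωx
  have h1x0 : (0:ℝ) < 1 - x := by linarith
  have hxd16 : x/(1-x)^2 ≤ (16/9)*x := aux1 hx0 hx4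
  have hxd0 : 0 ≤ x/(1-x)^2 := by positivity
  have hω0 : (0:ℝ) ≤ ω := by linarith
  have hA_le : ω^b ≤ (1-x)^2 := by
    calc ω^b ≤ (1-x)^b := pow_le_pow_left₀ hω0 hωle b
      _ ≤ (1-x)^2 := pow_le_pow_of_le_one h1x0.le (by linarith) hb
  have hA0 : (0:ℝ) ≤ ω^b := pow_nonneg hω0 b
  -- H basic bounds
  have hH0 : 0 ≤ H := by
    rw [hH]
    apply mul_nonneg _ hA0
    apply div_nonneg (by positivity) (by positivity)
  have hHbx : H ≤ (b:ℝ)*x := by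
    rw [hH]
    calc (b * x / (1 - x) ^ 2) * ω ^ b ≤ (b * x / (1 - x) ^ 2) * (1-x)^2 := by
          apply mul_le_mul_of_nonneg_left hA_le
          apply div_nonneg (by positivity) (by positivity)
      _ = (b:ℝ)*x := by field_simp
  have hH12 : H ≤ 1/2 := le_trans hHbx hbx12
  have hEpos : 0 < Real.exp (-1) := Real.exp_pos _
  obtain ⟨hE25, hE12⟩ := E_facts
  rcases le_or_gt (11/25 : ℝ) ((b:ℝ)*y) with hcase | hcase
  · -- trivial case
    have hz0 : (0:ℝ) ≤ (1-H)^N := pow_nonneg (by linarith) N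
    have hz1 : (1-H)^N ≤ 1 := pow_le_one₀ (by linarith) (by linarith)
    have habs : |(1 - (1 - H) ^ N) - (1 - Real.exp (-1))| ≤ 1 - Real.exp (-1) := by
      rw [abs_le]
      constructor <;> [linarith; linarith]
    have hstep : 4 * Real.exp (-1) * (11/25) ≤ 4 * Real.exp (-1) * ((b:ℝ)*y) :=
      mul_le_mul_of_nonneg_left hcase (by positivity)
    have hfin : 1 - Real.exp (-1) < 4 * Real.exp (-1) * b * y := by
      have h44 : 4 * Real.exp (-1) * ((b:ℝ)*y) = 4 * Real.exp (-1) * b * y := by ring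
      rw [← h44]
      calc 1 - Real.exp (-1) < 4 * Real.exp (-1) * (11/25) := by linarith
        _ ≤ _ := hstep
    linarith
  · -- main case
    set s : ℝ := (b:ℝ)*y with hsdef
    have hs0 : 0 < s := by positivity
    have hs44 : s < 11/25 := hcase
    have h2y : 2*y ≤ s := by
      rw [hsdef]
      exact mul_le_mul_of_nonneg_right hb2R hy0.le
    have hyb : y < 11/50 := by linarith
    have hu : |(b:ℝ)*(N:ℝ)*x - 1| ≤ s := le_trans hbNx (by linarith)
    obtain ⟨hulo, huhi⟩ := abs_le.mp hu
    clear hbNx hu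
    -- Bernoulli lower bound on ω^b
    have hAge : 1 - (b:ℝ)*(x/(1-x)^2) ≤ ω^b :=
      auxA b hxd0 (by linarith) hωge
    have hAge' : 1 - (1/4)*s ≤ ω^b := by
      have := aux2 hxe hy0 hyb hsdef hb2R
      linarith
    -- P = N*H bounds
    have hPeq : (N:ℝ)*H * (1-x)^2 = ((b:ℝ)*(N:ℝ)*x) * ω^b := by
      rw [hH]; field_simp
    have hD1 : (1-x)^2 ≤ 1 := by nlinarith
    have hDpos : 0 < (1-x)^2 := by positivity
    obtain ⟨hPge, hPle⟩ := auxP hDpos hD1 hA0 hA_le hAge' (by linarith) (by linarith)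
      hs0 hs44 hPeq
    -- H upper
    have hsy : (b:ℝ)*x = s*y := by rw [hsdef, hxe]; ring
    have hHs : H ≤ (11/50)*s := by
      have h6 : s*y ≤ s*(11/50) := mul_le_mul_of_nonneg_left hyb.le hs0.le
      calc H ≤ (b:ℝ)*x := hHbx
        _ = s*y := hsy
        _ ≤ (11/50)*s := by linarith
    have hH110 : H ≤ 1/10 := by linarith
    have h1H : (0:ℝ) < 1 - H := by linarith
    -- N positive
    have hN0 : (0:ℝ) < (N:ℝ) := by
      rcases Nat.eq_zero_or_pos N with rfl | h
      · simp only [Nat.cast_zero, mul_zero, zero_mul] at hulo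
        linarith
      · exact_mod_cast h
    -- log bounds
    have hlog_ub : Real.log (1-H) ≤ -H := by
      have := Real.log_le_sub_one_of_pos h1H
      linarith
    have hlog_lb : -(H/(1-H)) ≤ Real.log (1-H) := by
      have h := Real.log_le_sub_one_of_pos (show (0:ℝ) < (1-H)⁻¹ from inv_pos.mpr h1H)
      rw [Real.log_inv] at h
      have heq : (1-H)⁻¹ - 1 = H/(1-H) := by field_simp; ring
      rw [heq] at h
      linarith
    set t : ℝ := (N:ℝ) * Real.log (1-H) with htdef
    have ht_ub : t + 1 ≤ (5/4)*s := by
      have h1 : t ≤ (N:ℝ) * (-H) := mul_le_mul_of_nonneg_left hlog_ub hN0.le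
      have h2 : (N:ℝ) * (-H) = -((N:ℝ)*H) := by ring
      linarith
    have ht_lb : -((7/5)*s) ≤ t + 1 := by
      have h1 : (N:ℝ) * (-(H/(1-H))) ≤ t := mul_le_mul_of_nonneg_left hlog_lb hN0.le
      have h1' : -((N:ℝ)*H/(1-H)) ≤ t := by
        have : (N:ℝ) * (-(H/(1-H))) = -((N:ℝ)*H/(1-H)) := by ring
        linarith
      have h2 : (N:ℝ)*H ≤ (1 + (7/5)*s)*(1-H) := auxT hPle hHs hH0 hs0 hs44
      have h4 : ((N:ℝ)*H)/(1-H) ≤ 1 + (7/5)*s := by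
        rw [div_le_iff₀ h1H]; linarith
      linarith
    have habs : |t + 1| ≤ (7/5)*s := abs_le.mpr ⟨ht_lb, by linarith⟩
    have hc1 : (7/5)*s < 1 := by linarith
    have hexp : (1-H)^N = Real.exp t := by
      rw [htdef, Real.exp_nat_mul, Real.exp_log h1H]
    have hfact : Real.exp t - Real.exp (-1) = Real.exp (-1) * (Real.exp (t+1) - 1) := by
      rw [mul_sub, mul_one, ← Real.exp_add]
      ring_nf
    have hbd := abs_exp_sub_one_le habs hc1
    have hmain : |Real.exp t - Real.exp (-1)| ≤ Real.exp (-1) * ((7/5)*s / (1 - (7/5)*s)) := by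
      rw [hfact, abs_mul, abs_of_pos hEpos]
      exact mul_le_mul_of_nonneg_left hbd hEpos.le
    have hrat : (7/5)*s / (1-(7/5)*s) < 4*s := auxR hs0 hs44
    have hgoal : |Real.exp t - Real.exp (-1)| < 4 * Real.exp (-1) * b * y := by
      calc |Real.exp t - Real.exp (-1)| ≤ Real.exp (-1) * ((7/5)*s / (1 - (7/5)*s)) := hmain
        _ < Real.exp (-1) * (4*s) := mul_lt_mul_of_pos_left hrat hEpos
        _ = 4 * Real.exp (-1) * b * y := by rw [hsdef]; ring
    rw [hexp]
    calc |(1 - Real.exp t) - (1 - Real.exp (-1))| = |Real.exp t - Real.exp (-1)| := by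
          rw [abs_sub_comm]; ring_nf
      _ < 4 * Real.exp (-1) * b * y := hgoal
end
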